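/- Let Z, Y be real Hilbert spaces, K : Z → Y bounded linear, J : Z → ℝ ∪ {∞} proper convex lsc, u† ∈ Z, f = K u†, and f^δ ∈ Y with ‖f − f^δ‖ ≤ δ. Suppose u_α minimizes u ↦ ½‖Ku − f^δ‖² + α J(u) with optimality certificate p_α ∈ ∂J(u_α) satisfying K*(K u_α − f^δ) + α p_α = 0, and suppose v ∈ Y satisfies K*v ∈ ∂J(u†). Then ½‖K u_α − f + α v‖² + ½‖K u_α − f^δ‖² + α D^symm(u_α, u†) = ½‖f − f^δ‖² + (α²/2)‖v‖², where D^symm(u_α,u†) := ⟨u_α − u†, p_α − K*v⟩. -/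
import Mathlib


open RealInnerProductSpace

noncomputable section

variable {Z : Type*} [NormedAddCommGroup Z] [InnerProductSpace ℝ Z] [CompleteSpace Z]

/-- Convex subdifferential of an extended-real-valued functional. -/
def Subdiff (J : Z → EReal) (u : Z) : Set Z :=
  {p | ∀ w, J u + ((⟪p, w - u⟫ : ℝ) : EReal) ≤ J w}

/-- Proper: not identically +∞ and nowhere -∞. -/
def ProperE (J : Z → EReal) : Prop := (∃ u, J u ≠ ⊤) ∧ ∀ u, J u ≠ ⊥

/-- Convexity for extended-real-valued functionals. -/
def EConvexOn (J : Z → EReal) : Prop :=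
  ∀ u v : Z, ∀ a b : ℝ, 0 ≤ a → 0 ≤ b → a + b = 1 →
    J (a • u + b • v) ≤ (a : EReal) * J u + (b : EReal) * J v

/-- u is a proximal point of J at z: it minimises w ↦ ½‖w - z‖² + J w. -/
def IsProx (J : Z → EReal) (z u : Z) : Prop :=
  ∀ w, ((1/2 * ‖u - z‖^2 : ℝ) : EReal) + J u ≤ ((1/2 * ‖w - z‖^2 : ℝ) : EReal) + J w

variable {Y : Type*} [NormedAddCommGroup Y] [InnerProductSpace ℝ Y] [CompleteSpace Y]

/-- The exact error identity for variational regularisation under the source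
condition: ½‖Ku_α - f + αv‖² + ½‖Ku_α - f^δ‖² + α D^symm(u_α, u†)
= ½‖f - f^δ‖² + (α²/2)‖v‖². -/
theorem error_identity (K : Z →L[ℝ] Y) (J : Z → EReal)
    (hproper : ProperE J) (hconv : EConvexOn J) (hlsc : LowerSemicontinuous J)
    (udag ualpha : Z) (f fdelta : Y) (v : Y) (palpha : Z) (alpha delta : ℝ)
    (halpha : 0 < alpha) (hf : f = K udag) (hnoise : ‖f - fdelta‖ ≤ delta)
    (hpalpha : palpha ∈ Subdiff J ualpha)
    (hopt : (ContinuousLinearMap.adjoint K) (K ualpha - fdelta) + alpha • palpha = 0)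
    (hsc : (ContinuousLinearMap.adjoint K) v ∈ Subdiff J udag) :
    1/2 * ‖K ualpha - f + alpha • v‖^2 + 1/2 * ‖K ualpha - fdelta‖^2
        + alpha * ⟪ualpha - udag, palpha - (ContinuousLinearMap.adjoint K) v⟫
      = 1/2 * ‖f - fdelta‖^2 + alpha^2 / 2 * ‖v‖^2 := by
  have hap : alpha • palpha = -((ContinuousLinearMap.adjoint K) (K ualpha - fdelta)) := by
    rw [eq_neg_iff_add_eq_zero, add_comm]; exact hopt
  have key : alpha * ⟪ualpha - udag, palpha - (ContinuousLinearMap.adjoint K) v⟫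
      = - ⟪K ualpha - f, K ualpha - fdelta⟫ - alpha * ⟪K ualpha - f, v⟫ := by
    have h1 : alpha * ⟪ualpha - udag, palpha - (ContinuousLinearMap.adjoint K) v⟫
        = ⟪ualpha - udag, alpha • palpha⟫ - alpha * ⟪ualpha - udag, (ContinuousLinearMap.adjoint K) v⟫ := by
      rw [inner_sub_right, inner_smul_right]; ring
    rw [h1, hap, inner_neg_right, ContinuousLinearMap.adjoint_inner_right,
        ContinuousLinearMap.adjoint_inner_right, map_sub, hf]
  rw [key]
  have h2 : ‖K ualpha - f + alpha • v‖^2 = ‖K ualpha - f‖^2 + 2 * ⟪K ualpha - f, alpha • v⟫ + ‖alpha • v‖^2 :=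
    norm_add_sq_real _ _
  have h3 : ‖f - fdelta‖^2 = ‖(K ualpha - f) - (K ualpha - fdelta)‖^2 := by
    rw [show (K ualpha - f) - (K ualpha - fdelta) = -(f - fdelta) by abel, norm_neg]
  have h4 : ‖(K ualpha - f) - (K ualpha - fdelta)‖^2
      = ‖K ualpha - f‖^2 - 2 * ⟪K ualpha - f, K ualpha - fdelta⟫ + ‖K ualpha - fdelta‖^2 :=
    norm_sub_sq_real _ _
  have h5 : ‖alpha • v‖^2 = alpha^2 * ‖v‖^2 := by
    simp [norm_smul, mul_pow, sq_abs]
  rw [h2, h3, h4, h5, inner_smul_right]; ring
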